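/- Let C be a finitely complete category satisfying the triangular lemma, let X be an object of C, and let R and S be internal equivalence relations on X represented by monomorphisms r = ⟨r₁, r₂⟩ : R₀ ⟶ X ⨯ X and s = ⟨s₁, s₂⟩ : S₀ ⟶ X ⨯ X. Let (P, π_R : P ⟶ R₀, π_S : P ⟶ S₀) be the pullback of r₂ along s₁ (so π_R ≫ r₂ = π_S ≫ s₁), and suppose there is a partial Mal'tsev operation p : P ⟶ X, i.e. a morphism such that for every w : W ⟶ P, writing x = w ≫ π_R ≫ r₁, y = w ≫ π_R ≫ r₂ and z = w ≫ π_S ≫ s₂: if x = y then w ≫ p = z, and if y = z then w ≫ p = x. Then R ∩ S is the diagonal of X: for all morphisms a, b : W ⟶ X with a R b and a S b, one has a = b. -/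

import Mathlib

open CategoryTheory CategoryTheory.Limits

universe v u v₂ u₂

variable {C : Type u} [Category.{v} C]

/-- For an internal relation represented by `r : R₀ ⟶ X ⨯ X` and morphisms
`x, y : S ⟶ X`, `x R y` means `⟨x, y⟩` factors through `r`. -/
def CategoryTheory.RelFactors [HasBinaryProducts C] {R₀ X : C} (r : R₀ ⟶ X ⨯ X)
    {S : C} (x y : S ⟶ X) : Prop :=
  ∃ u : S ⟶ R₀, u ≫ r = prod.lift x y

/-- `r : R₀ ⟶ X ⨯ X` represents an internal equivalence relation on `X`:
it is a monomorphism and the induced relation on generalized elements is reflexive,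
symmetric and transitive. -/
structure CategoryTheory.IsInternalEquivalence [HasBinaryProducts C] {R₀ X : C}
    (r : R₀ ⟶ X ⨯ X) : Prop where
  mono : Mono r
  refl : ∀ ⦃S : C⦄ (x : S ⟶ X), RelFactors r x x
  symm : ∀ ⦃S : C⦄ (x y : S ⟶ X), RelFactors r x y → RelFactors r y x
  trans : ∀ ⦃S : C⦄ (x y z : S ⟶ X),
    RelFactors r x y → RelFactors r y z → RelFactors r x z

/-- A category with binary products satisfies the *triangular lemma* if for all internal
equivalence relations `R, S, T` on an object `X` with `R ∩ S ≤ T`, whenever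
`x R y`, `y S z` and `x T z`, then `y T z`. -/
def CategoryTheory.SatisfiesTriangularLemma (C : Type u) [Category.{v} C]
    [HasBinaryProducts C] : Prop :=
  ∀ ⦃X R₀ S₀ T₀ : C⦄ (r : R₀ ⟶ X ⨯ X) (s : S₀ ⟶ X ⨯ X) (t : T₀ ⟶ X ⨯ X),
    IsInternalEquivalence r → IsInternalEquivalence s → IsInternalEquivalence t →
    (∀ ⦃W : C⦄ (x y : W ⟶ X), RelFactors r x y → RelFactors s x y → RelFactors t x y) →
    ∀ ⦃W : C⦄ (x y z : W ⟶ X),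
      RelFactors r x y → RelFactors s y z → RelFactors t x z → RelFactors t y z

section KerRelAux

variable [HasFiniteLimits C]

/-- The kernel pair of `f` viewed as an internal relation. -/
noncomputable def kerRel {Y Z : C} (f : Y ⟶ Z) : pullback f f ⟶ Y ⨯ Y :=
  prod.lift (pullback.fst f f) (pullback.snd f f)

lemma relFactors_kerRel_iff {Y Z W : C} (f : Y ⟶ Z) (x y : W ⟶ Y) :
    RelFactors (kerRel f) x y ↔ x ≫ f = y ≫ f := by
  constructor
  · rintro ⟨u, hu⟩
    have h1 : u ≫ (pullback.fst f f) = x := by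
      have := congrArg (· ≫ (prod.fst : Y ⨯ Y ⟶ Y)) hu
      simpa [kerRel, prod.lift_fst, prod.lift_snd] using this
    have h2 : u ≫ (pullback.snd f f) = y := by
      have := congrArg (· ≫ (prod.snd : Y ⨯ Y ⟶ Y)) hu
      simpa [kerRel, prod.lift_fst, prod.lift_snd] using this
    calc x ≫ f = u ≫ pullback.fst f f ≫ f := by rw [← h1]; simp
      _ = u ≫ pullback.snd f f ≫ f := by rw [pullback.condition]
      _ = y ≫ f := by rw [← h2]; simp
  · intro h
    refine ⟨pullback.lift x y h, ?_⟩
    apply Limits.prod.hom_ext <;> simp [kerRel, prod.lift_fst, prod.lift_snd, pullback.lift_fst, pullback.lift_snd]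

lemma kerRel_isEquiv {Y Z : C} (f : Y ⟶ Z) : IsInternalEquivalence (kerRel f) := by
  constructor
  · constructor
    intro W g h e
    apply pullback.hom_ext
    · have := congrArg (· ≫ (prod.fst : Y ⨯ Y ⟶ Y)) e
      simpa [kerRel, prod.lift_fst, prod.lift_snd] using this
    · have := congrArg (· ≫ (prod.snd : Y ⨯ Y ⟶ Y)) e
      simpa [kerRel, prod.lift_fst, prod.lift_snd] using this
  · intro W x
    exact (relFactors_kerRel_iff f x x).2 rfl
  · intro W x y h
    exact (relFactors_kerRel_iff f y x).2 ((relFactors_kerRel_iff f x y).1 h).symm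
  · intro W x y z h1 h2
    exact (relFactors_kerRel_iff f x z).2
      (((relFactors_kerRel_iff f x y).1 h1).trans ((relFactors_kerRel_iff f y z).1 h2))

end KerRelAux

/-- In a finitely complete category satisfying the triangular lemma, if two internal
equivalence relations `R` and `S` on `X` admit a partial Mal'tsev operation
`p : R₀ ×_X S₀ ⟶ X`, then `R ∩ S` is the diagonal of `X`. -/
theorem inf_eq_diagonal_of_partial_maltsev [HasFiniteLimits C]
    (hC : SatisfiesTriangularLemma C)
    {X R₀ S₀ P : C} (r₁ r₂ : R₀ ⟶ X) (s₁ s₂ : S₀ ⟶ X)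
    (hr : IsInternalEquivalence (prod.lift r₁ r₂))
    (hs : IsInternalEquivalence (prod.lift s₁ s₂))
    (πR : P ⟶ R₀) (πS : P ⟶ S₀) (hP : IsPullback πR πS r₂ s₁)
    (p : P ⟶ X)
    (hp : ∀ ⦃W : C⦄ (w : W ⟶ P),
      (w ≫ πR ≫ r₁ = w ≫ πR ≫ r₂ → w ≫ p = w ≫ πS ≫ s₂) ∧
      (w ≫ πR ≫ r₂ = w ≫ πS ≫ s₂ → w ≫ p = w ≫ πR ≫ r₁)) :
    ∀ ⦃W : C⦄ (a b : W ⟶ X),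
      RelFactors (prod.lift r₁ r₂) a b → RelFactors (prod.lift s₁ s₂) a b → a = b := by
  intro W a b hab hab'
  obtain ⟨u, hu⟩ := hab
  have hu1 : u ≫ r₁ = a := by
    have := congrArg (· ≫ (prod.fst : X ⨯ X ⟶ X)) hu; simpa [prod.lift_fst, prod.lift_snd] using this
  have hu2 : u ≫ r₂ = b := by
    have := congrArg (· ≫ (prod.snd : X ⨯ X ⟶ X)) hu; simpa [prod.lift_fst, prod.lift_snd] using this
  obtain ⟨ubb, hubb⟩ := hr.refl b
  have hubb1 : ubb ≫ r₁ = b := by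
    have := congrArg (· ≫ (prod.fst : X ⨯ X ⟶ X)) hubb; simpa [prod.lift_fst, prod.lift_snd] using this
  have hubb2 : ubb ≫ r₂ = b := by
    have := congrArg (· ≫ (prod.snd : X ⨯ X ⟶ X)) hubb; simpa [prod.lift_fst, prod.lift_snd] using this
  obtain ⟨vbb, hvbb⟩ := hs.refl b
  have hvbb1 : vbb ≫ s₁ = b := by
    have := congrArg (· ≫ (prod.fst : X ⨯ X ⟶ X)) hvbb; simpa [prod.lift_fst, prod.lift_snd] using this
  have hvbb2 : vbb ≫ s₂ = b := by
    have := congrArg (· ≫ (prod.snd : X ⨯ X ⟶ X)) hvbb; simpa [prod.lift_fst, prod.lift_snd] using this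
  obtain ⟨vba, hvba⟩ := hs.symm a b hab'
  have hvba1 : vba ≫ s₁ = b := by
    have := congrArg (· ≫ (prod.fst : X ⨯ X ⟶ X)) hvba; simpa [prod.lift_fst, prod.lift_snd] using this
  have hvba2 : vba ≫ s₂ = a := by
    have := congrArg (· ≫ (prod.snd : X ⨯ X ⟶ X)) hvba; simpa [prod.lift_fst, prod.lift_snd] using this
  -- three triples in P: t₁ = (a,b,b), t₂ = (b,b,b), t₃ = (b,b,a)
  let t₁ : W ⟶ P := hP.lift u vbb (by rw [hu2, hvbb1])
  let t₂ : W ⟶ P := hP.lift ubb vbb (by rw [hubb2, hvbb1])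
  let t₃ : W ⟶ P := hP.lift ubb vba (by rw [hubb2, hvba1])
  have ht₁R : t₁ ≫ πR = u := hP.lift_fst _ _ _
  have ht₁S : t₁ ≫ πS = vbb := hP.lift_snd _ _ _
  have ht₂R : t₂ ≫ πR = ubb := hP.lift_fst _ _ _
  have ht₂S : t₂ ≫ πS = vbb := hP.lift_snd _ _ _
  have ht₃R : t₃ ≫ πR = ubb := hP.lift_fst _ _ _
  have ht₃S : t₃ ≫ πS = vba := hP.lift_snd _ _ _
  -- values of p on the triples
  have hp₁ : t₁ ≫ p = a := by
    have := (hp t₁).2 (by rw [reassoc_of% ht₁R, reassoc_of% ht₁S, hu2, hvbb2])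
    rw [this, reassoc_of% ht₁R, hu1]
  have hp₂ : t₂ ≫ p = b := by
    have := (hp t₂).2 (by rw [reassoc_of% ht₂R, reassoc_of% ht₂S, hubb2, hvbb2])
    rw [this, reassoc_of% ht₂R, hubb1]
  have hp₃ : t₃ ≫ p = a := by
    have := (hp t₃).1 (by simp only [reassoc_of% ht₃R]; rw [hubb1, hubb2])
    rw [this, reassoc_of% ht₃S, hvba2]
  -- apply the triangular lemma with E₁ = ker πS, E₂ = ker πR, T = ker p
  have key := hC (kerRel πS) (kerRel πR) (kerRel p)
    (kerRel_isEquiv πS) (kerRel_isEquiv πR) (kerRel_isEquiv p)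
    (fun V x y h1 h2 => by
      have e : x = y := hP.hom_ext ((relFactors_kerRel_iff πR x y).1 h2)
        ((relFactors_kerRel_iff πS x y).1 h1)
      rw [e]
      exact (kerRel_isEquiv p).refl y)
    t₁ t₂ t₃
    ((relFactors_kerRel_iff πS t₁ t₂).2 (by rw [ht₁S, ht₂S]))
    ((relFactors_kerRel_iff πR t₂ t₃).2 (by rw [ht₂R, ht₃R]))
    ((relFactors_kerRel_iff p t₁ t₃).2 (by rw [hp₁, hp₃]))
  have : t₂ ≫ p = t₃ ≫ p := (relFactors_kerRel_iff p t₂ t₃).1 key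
  rw [hp₂, hp₃] at this
  exact this.symm
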